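/- Let U be a nonzero n×n paraunitary matrix of Laurent polynomials over ℂ, and let Δ be a real number with 0 < Δ < 1. Then ‖U[Δ]‖ ≤ Δ^{val(U)}, where ‖·‖ is the operator (spectral) norm. -/

import Mathlib

open scoped ComplexConjugate
open LaurentPolynomial Finset

noncomputable section

/-- Evaluation of a Laurent polynomial at a complex number. -/
def Leval (ω : ℂ) (p : LaurentPolynomial ℂ) : ℂ :=
  ∑ k ∈ p.coeff.support, p.coeff k * ω ^ k

/-- Para-conjugate of a Laurent polynomial: conjugate the coefficients and substitute `z⁻¹`. -/
def paraConj (p : LaurentPolynomial ℂ) : LaurentPolynomial ℂ :=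
  AddMonoidAlgebra.ofCoeff (Finsupp.equivMapDomain (Equiv.neg ℤ) (Finsupp.mapRange (starRingEnd ℂ) (map_zero _) p.coeff))

/-- `U*`: the transpose of `U` with every entry para-conjugated. -/
def paraConjTranspose {n : ℕ} (U : Matrix (Fin n) (Fin n) (LaurentPolynomial ℂ)) :
    Matrix (Fin n) (Fin n) (LaurentPolynomial ℂ) :=
  U.transpose.map paraConj

/-- A Laurent-polynomial matrix is paraunitary if `U* * U = 1`. -/
def IsParaunitary {n : ℕ} (U : Matrix (Fin n) (Fin n) (LaurentPolynomial ℂ)) : Prop :=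
  paraConjTranspose U * U = 1

/-- Entrywise evaluation of a matrix of Laurent polynomials at a complex number. -/
def MatEval {n : ℕ} (ω : ℂ) (M : Matrix (Fin n) (Fin n) (LaurentPolynomial ℂ)) :
    Matrix (Fin n) (Fin n) ℂ :=
  M.map (Leval ω)

/-- A plane-rotation gate: identity except on the 2×2 principal submatrix in rows/columns
`a ≠ b`, where it is a real orthogonal 2×2 matrix (embedded as constant Laurent polynomials). -/
def IsRotationGate {n : ℕ} (G : Matrix (Fin n) (Fin n) (LaurentPolynomial ℂ)) : Prop :=
  ∃ (a b : Fin n) (R : Matrix (Fin 2) (Fin 2) ℝ), a ≠ b ∧ R.transpose * R = 1 ∧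
    G a a = LaurentPolynomial.C (R 0 0 : ℂ) ∧
    G a b = LaurentPolynomial.C (R 0 1 : ℂ) ∧
    G b a = LaurentPolynomial.C (R 1 0 : ℂ) ∧
    G b b = LaurentPolynomial.C (R 1 1 : ℂ) ∧
    (∀ i : Fin n, i ≠ a → i ≠ b → G i i = 1) ∧
    (∀ i j : Fin n, i ≠ j → ¬(i = a ∧ j = b) → ¬(i = b ∧ j = a) → G i j = 0)

/-- A monomial gate: diagonal, equal to `1` on every diagonal entry except one, which is `z^k`. -/
def IsMonomialGate {n : ℕ} (G : Matrix (Fin n) (Fin n) (LaurentPolynomial ℂ)) : Prop :=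
  ∃ (a : Fin n) (k : ℤ),
    G a a = LaurentPolynomial.T k ∧
    (∀ i : Fin n, i ≠ a → G i i = 1) ∧
    (∀ i j : Fin n, i ≠ j → G i j = 0)

/-- A Laurent lift of length `m`: `M 0 = 1` and each step is left multiplication by a
plane-rotation or monomial gate. -/
def IsLaurentLift {n : ℕ} (m : ℕ) (M : ℕ → Matrix (Fin n) (Fin n) (LaurentPolynomial ℂ)) : Prop :=
  M 0 = 1 ∧ ∀ t < m, ∃ G : Matrix (Fin n) (Fin n) (LaurentPolynomial ℂ),
    (IsRotationGate G ∨ IsMonomialGate G) ∧ M (t + 1) = G * M t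

/-- The union of the supports of all the entries of a Laurent-polynomial matrix. -/
def matSupport {n : ℕ} (M : Matrix (Fin n) (Fin n) (LaurentPolynomial ℂ)) : Finset ℤ :=
  (Finset.univ : Finset (Fin n × Fin n)).biUnion fun ij => (M ij.1 ij.2).coeff.support

/-- `deg(M)`: the maximal exponent with a nonzero coefficient over all nonzero entries
(junk value `0` for the zero matrix). -/
def matDeg {n : ℕ} (M : Matrix (Fin n) (Fin n) (LaurentPolynomial ℂ)) : ℤ :=
  WithBot.unbotD 0 (matSupport M).max

/-- `val(M)`: the minimal exponent with a nonzero coefficient over all nonzero entries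
(junk value `0` for the zero matrix). -/
def matVal {n : ℕ} (M : Matrix (Fin n) (Fin n) (LaurentPolynomial ℂ)) : ℤ :=
  WithTop.untopD 0 (matSupport M).min

/-- A Laurent lift is `Δ`-algebraically `κ`-well conditioned if
`Δ ^ (val(M_t) - deg(M_t)) ≤ κ` for all `t`. -/
def IsAlgWellConditioned {n : ℕ} (m : ℕ) (M : ℕ → Matrix (Fin n) (Fin n) (LaurentPolynomial ℂ))
    (Δ κ : ℝ) : Prop :=
  ∀ t ≤ m, Δ ^ (matVal (M t) - matDeg (M t)) ≤ κ

/-- The L2 operator (spectral) norm of a complex matrix. -/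
def specNorm {n : ℕ} (A : Matrix (Fin n) (Fin n) ℂ) : ℝ :=
  ‖Matrix.toEuclideanCLM (𝕜 := ℂ) A‖

/-- The Walsh–Hadamard matrix of order `n = 2^s`:
`H_n(i,j) = n^{-1/2} · (-1)^{⟨[i],[j]⟩}` with `⟨·,·⟩` the mod-2 inner product of bit vectors. -/
def WalshHadamard (s : ℕ) : Matrix (Fin (2 ^ s)) (Fin (2 ^ s)) ℝ :=
  fun i j => (Real.sqrt (2 ^ s))⁻¹ *
    (-1 : ℝ) ^ (∑ r ∈ Finset.range s, (Nat.testBit i.val r).toNat * (Nat.testBit j.val r).toNat)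

/-- The quasi-entropy kernel `h(u) = -u·log₂|u|` (note `h 0 = 0`, since `Real.logb 2 0 = 0`). -/
def hQE (u : ℂ) : ℂ := -u * (Real.logb 2 ‖u‖ : ℂ)

/-- The preconditioned quasi-entropy
`Φ_{A,B}(M) = Σ_k Σ_{i,j} h(coeff((M·A)_{i,j},k) · conj(coeff((M·B)_{i,j},k)))`.
The sum over `k` is restricted to a finite set supporting all nonzero terms. -/
def Phi {n : ℕ} (A B M : Matrix (Fin n) (Fin n) (LaurentPolynomial ℂ)) : ℂ :=
  ∑ i : Fin n, ∑ j : Fin n,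
    ∑ k ∈ ((M * A) i j).coeff.support ∪ ((M * B) i j).coeff.support,
      hQE (((M * A) i j).coeff k * conj (((M * B) i j).coeff k))

/-- The norm of a Laurent polynomial: `sqrt (Σ_k |coeff(p,k)|²)`. -/
def pnorm (p : LaurentPolynomial ℂ) : ℝ :=
  Real.sqrt (∑ k ∈ p.coeff.support, ‖p.coeff k‖ ^ 2)

/-- The norm of the `i`-th row of a Laurent-polynomial matrix. -/
def rowNorm {n : ℕ} (M : Matrix (Fin n) (Fin n) (LaurentPolynomial ℂ)) (i : Fin n) : ℝ :=
  Real.sqrt (∑ j : Fin n, pnorm (M i j) ^ 2)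

/-- The `(2,∞)` norm of a Laurent-polynomial matrix: the maximum row norm. -/
def norm2inf {n : ℕ} (M : Matrix (Fin n) (Fin n) (LaurentPolynomial ℂ)) : ℝ :=
  ⨆ i : Fin n, rowNorm M i

end

noncomputable section AuxProof

/-- Evaluation at a unit as an algebra homomorphism. -/
def LevalHom (u : ℂˣ) : LaurentPolynomial ℂ →ₐ[ℂ] ℂ :=
  AddMonoidAlgebra.lift ℂ ℂ ℤ ((Units.coeHom ℂ).comp (zpowersHom ℂˣ u))

lemma LevalHom_eq_Leval (u : ℂˣ) (p : LaurentPolynomial ℂ) :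
    LevalHom u p = Leval (u : ℂ) p := by
  rw [LevalHom, AddMonoidAlgebra.lift_apply, Finsupp.sum, Leval]
  refine Finset.sum_congr rfl fun k hk => ?_
  simp [smul_eq_mul]

lemma Leval_eq_sum (ω : ℂ) (p : LaurentPolynomial ℂ) (s : Finset ℤ) (hs : p.coeff.support ⊆ s) :
    Leval ω p = ∑ k ∈ s, p.coeff k * ω ^ k := by
  rw [Leval]
  exact Finset.sum_subset hs fun k _ hk => by
    simp [Finsupp.notMem_support_iff.mp hk]

lemma Leval_paraConj (z : ℂ) (hz : ‖z‖ = 1) (p : LaurentPolynomial ℂ) :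
    Leval z (paraConj p) = conj (Leval z p) := by
  have hconj : (starRingEnd ℂ) z = z⁻¹ := (Complex.inv_eq_conj hz).symm
  have hsupp : (paraConj p).coeff.support ⊆ p.coeff.support.map (Equiv.neg ℤ).toEmbedding := by
    intro k hk
    rw [Finsupp.mem_support_iff] at hk
    rw [paraConj, AddMonoidAlgebra.coeff_ofCoeff, Finsupp.equivMapDomain_apply] at hk
    simp only [Finsupp.mapRange_apply] at hk
    simp only [Finset.mem_map, Equiv.coe_toEmbedding, Equiv.neg_apply]
    simp only [Equiv.neg_symm, Equiv.neg_apply] at hk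
    refine ⟨-k, ?_, by simp⟩
    rw [Finsupp.mem_support_iff]
    exact fun h => hk (by simp [h])
  rw [Leval_eq_sum z _ _ hsupp, Finset.sum_map, Leval, map_sum]
  refine Finset.sum_congr rfl fun m hm => ?_
  rw [paraConj, AddMonoidAlgebra.coeff_ofCoeff, Finsupp.equivMapDomain_apply]
  simp only [Equiv.coe_toEmbedding, Equiv.neg_apply, Equiv.neg_symm, neg_neg,
    Finsupp.mapRange_apply, map_mul, map_zpow₀, hconj, zpow_neg, inv_zpow]

lemma MatEval_mul {n : ℕ} (z : ℂ) (hz : z ≠ 0)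
    (A B : Matrix (Fin n) (Fin n) (LaurentPolynomial ℂ)) :
    MatEval z (A * B) = MatEval z A * MatEval z B := by
  set u : ℂˣ := Units.mk0 z hz
  have hm : ∀ M : Matrix (Fin n) (Fin n) (LaurentPolynomial ℂ),
      MatEval z M = M.map (LevalHom u : LaurentPolynomial ℂ →+* ℂ) := by
    intro M; ext i j
    simp [MatEval, Matrix.map_apply, LevalHom_eq_Leval, u]
  rw [hm, hm, hm, Matrix.map_mul]

lemma MatEval_one {n : ℕ} (z : ℂ) (hz : z ≠ 0) :
    MatEval z (1 : Matrix (Fin n) (Fin n) (LaurentPolynomial ℂ)) = 1 := by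
  set u : ℂˣ := Units.mk0 z hz
  have : MatEval z (1 : Matrix (Fin n) (Fin n) (LaurentPolynomial ℂ))
      = (1 : Matrix (Fin n) (Fin n) (LaurentPolynomial ℂ)).map
        (LevalHom u : LaurentPolynomial ℂ →+* ℂ) := by
    ext i j
    simp [MatEval, Matrix.map_apply, LevalHom_eq_Leval, u]
  rw [this, Matrix.map_one _ (map_zero _) (map_one _)]

lemma specNorm_le_one {n : ℕ} (A : Matrix (Fin n) (Fin n) ℂ) (hA : A.conjTranspose * A = 1) :
    specNorm A ≤ 1 := by
  set T := Matrix.toEuclideanCLM (𝕜 := ℂ) A with hT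
  have hsq : ‖T‖ * ‖T‖ = ‖star T * T‖ := (CStarRing.norm_star_mul_self).symm
  have hstar : star T * T = 1 := by
    rw [hT, ← map_star, ← map_mul, Matrix.star_eq_conjTranspose, hA, map_one]
  rw [hstar] at hsq
  have hone : ‖(1 : EuclideanSpace ℂ (Fin n) →L[ℂ] EuclideanSpace ℂ (Fin n))‖ ≤ 1 := by
    rw [ContinuousLinearMap.one_def]
    exact ContinuousLinearMap.norm_id_le
  have h0 : (0:ℝ) ≤ ‖T‖ := norm_nonneg _
  rw [specNorm]
  nlinarith [hsq, hone, h0]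

end AuxProof

set_option synthInstance.maxHeartbeats 1000000
set_option maxHeartbeats 1000000

/-- norm bound for an evaluated paraunitary matrix. -/
theorem paraunitary_eval_norm_bound {n : ℕ}
    (U : Matrix (Fin n) (Fin n) (LaurentPolynomial ℂ)) (hU : IsParaunitary U) (hU0 : U ≠ 0)
    (Δ : ℝ) (h0 : 0 < Δ) (h1 : Δ < 1) :
    specNorm (MatEval (Δ : ℂ) U) ≤ Δ ^ matVal U := by
  classical
  set v := matVal U with hv
  -- the support is nonempty
  have hne : (matSupport U).Nonempty := by
    have hex : ∃ i j, U i j ≠ 0 := by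
      by_contra h
      push_neg at h
      exact hU0 (by ext i j : 2; simp [h])
    obtain ⟨i, j, hij⟩ := hex
    obtain ⟨k, hk⟩ := Finsupp.support_nonempty_iff.mpr (mt AddMonoidAlgebra.coeff_eq_zero.mp hij)
    exact ⟨k, Finset.mem_biUnion.mpr ⟨(i, j), Finset.mem_univ _, hk⟩⟩
  have hmin : ∀ k ∈ matSupport U, v ≤ k := by
    intro k hk
    obtain ⟨m, hm⟩ := Finset.min_of_nonempty hne
    have h1 : (matSupport U).min ≤ (k : WithTop ℤ) := Finset.min_le hk
    rw [hm] at h1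
    have : m ≤ k := WithTop.coe_le_coe.mp h1
    simpa [hv, matVal, hm] using this
  have hsub : ∀ i j : Fin n, (U i j).coeff.support ⊆ matSupport U := fun i j k hk =>
    Finset.mem_biUnion.mpr ⟨(i, j), Finset.mem_univ _, hk⟩
  -- coefficient matrices
  set C : ℤ → Matrix (Fin n) (Fin n) ℂ := fun k i j => (U i j).coeff k with hC
  set g : ℂ → (EuclideanSpace ℂ (Fin n) →L[ℂ] EuclideanSpace ℂ (Fin n)) :=
    fun z => ∑ k ∈ matSupport U,
      z ^ (k - v).toNat • Matrix.toEuclideanCLM (𝕜 := ℂ) (C k) with hg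
  have hdiff : Differentiable ℂ g :=
    Differentiable.fun_sum fun k _ => (differentiable_pow _).smul_const _
  -- key identity
  have hkey : ∀ z : ℂ, z ≠ 0 →
      Matrix.toEuclideanCLM (𝕜 := ℂ) (MatEval z U) = z ^ v • g z := by
    intro z hz0
    have h1 : MatEval z U = ∑ k ∈ matSupport U, z ^ k • C k := by
      ext i j
      rw [MatEval, Matrix.map_apply, Leval_eq_sum z _ (matSupport U) (hsub i j)]
      rw [Matrix.sum_apply]
      exact Finset.sum_congr rfl fun k _ => by
        simp [hC, Matrix.smul_apply, smul_eq_mul, mul_comm]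
        rfl
    rw [h1, map_sum, hg, Finset.smul_sum]
    refine Finset.sum_congr rfl fun k hk => ?_
    rw [map_smul, smul_smul]
    congr 1
    have hvk : v ≤ k := hmin k hk
    rw [← zpow_natCast z, Int.toNat_of_nonneg (sub_nonneg.mpr hvk), ← zpow_add₀ hz0]
    congr 1
    ring
  -- on the sphere, g has norm at most 1
  have hsphere : ∀ z ∈ Metric.sphere (0 : ℂ) 1, ‖g z‖ ≤ 1 := by
    intro z hz
    have hz1 : ‖z‖ = 1 := by simpa [Metric.mem_sphere, dist_zero_right] using hz
    have hz0 : z ≠ 0 := fun h => by simp [h] at hz1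
    have huni : (MatEval z U).conjTranspose * MatEval z U = 1 := by
      have hct : (MatEval z U).conjTranspose = MatEval z (paraConjTranspose U) := by
        ext i j
        simp [Matrix.conjTranspose_apply, MatEval, paraConjTranspose, Matrix.map_apply,
          Leval_paraConj z hz1, Matrix.transpose_apply]
      rw [hct, ← MatEval_mul z hz0, hU, MatEval_one z hz0]
    have hle := specNorm_le_one (MatEval z U) huni
    rw [specNorm, hkey z hz0, norm_smul (z ^ v) (g z), norm_zpow, hz1, one_zpow, one_mul] at hle
    exact hle
  -- maximum modulus principle
  have hball : ‖g (Δ : ℂ)‖ ≤ 1 := by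
    refine Complex.norm_le_of_forall_mem_frontier_norm_le (U := Metric.ball (0:ℂ) 1) Metric.isBounded_ball
      hdiff.diffContOnCl (fun z hz => ?_) ?_
    · rw [frontier_ball (0 : ℂ) one_ne_zero] at hz
      exact hsphere z hz
    · rw [closure_ball (0 : ℂ) one_ne_zero]
      rw [Metric.mem_closedBall, dist_zero_right]
      simp only [Complex.norm_real, Real.norm_eq_abs, abs_of_pos h0]
      exact h1.le
  -- conclude
  have hΔ0 : (Δ : ℂ) ≠ 0 := by exact_mod_cast h0.ne'
  have hΔn : ‖(Δ : ℂ)‖ = Δ := by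
    simp [Complex.norm_real, Real.norm_eq_abs, abs_of_pos h0]
  rw [specNorm, hkey (Δ : ℂ) hΔ0, norm_smul ((Δ:ℂ) ^ v) (g (Δ:ℂ)), norm_zpow, hΔn]
  calc Δ ^ v * ‖g (Δ : ℂ)‖ ≤ Δ ^ v * 1 :=
        mul_le_mul_of_nonneg_left hball (zpow_nonneg h0.le v)
    _ = Δ ^ v := mul_one _
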